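/- Let t ≥ 1 and let χ be a t-coloring of E(K_n). Let T be a subtree of K_n with m ≥ 1 edges such that χ restricted to the edges of T is a proper edge-coloring (any two edges of T sharing a vertex receive different colors), and let x, y be two distinct vertices of K_n, neither belonging to V(T), such that the color χ(xy) does not appear on any edge of T. Then there exists a subtree T* of K_n such that: (1) V(T*) ⊆ V(T) ∪ {x, y}; (2) T* has either m+1 or m+2 edges; (3) every color that χ assigns to some edge of T, as well as the color χ(xy), is assigned by χ to some edge of T*; and (4) χ restricted to the edges of T* is a proper edge-coloring of T*. -/

import Mathlib

open SimpleGraph Set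

namespace TreeExtendAux

variable {V : Type*}

lemma reachable_deleteEdges' {G : SimpleGraph V} {s : Set (Sym2 V)}
    (hs : ∀ a b : V, G.Adj a b → s(a, b) ∈ s → (G.deleteEdges s).Reachable a b)
    {a b : V} (h : G.Reachable a b) : (G.deleteEdges s).Reachable a b := by
  obtain ⟨p⟩ := h
  induction p with
  | nil => exact Reachable.refl _
  | @cons u v w h q ih =>
    refine Reachable.trans ?_ ih
    by_cases hm : s(u, v) ∈ s
    · exact hs _ _ h hm
    · exact Adj.reachable (by simp [SimpleGraph.deleteEdges_adj, h, hm])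

lemma connected_deleteEdges {G : SimpleGraph V} {s : Set (Sym2 V)} (hG : G.Connected)
    (hs : ∀ a b : V, G.Adj a b → s(a, b) ∈ s → (G.deleteEdges s).Reachable a b) :
    (G.deleteEdges s).Connected := by
  haveI := hG.nonempty
  exact ⟨fun a b => reachable_deleteEdges' hs (hG a b)⟩

lemma tree_card [Fintype V] {G : SimpleGraph V} (hc : G.Connected) (ha : G.IsAcyclic) :
    Fintype.card V = G.edgeSet.ncard + 1 := by
  classical
  haveI : Fintype G.edgeSet := Fintype.ofFinite _
  have h := (SimpleGraph.IsTree.mk hc ha).card_edgeFinset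
  rw [← h]
  congr 1
  rw [Set.ncard_eq_toFinset_card']
  congr 1

lemma exists_edge_of_not_acyclic {G : SimpleGraph V} (h : ¬ G.IsAcyclic) :
    ∃ u w, G.Adj u w ∧ (G.deleteEdges {s(u, w)}).Reachable u w := by
  simp only [IsAcyclic, not_forall, not_not] at h
  obtain ⟨v, c, hc⟩ := h
  obtain ⟨e, he⟩ : ∃ e, e ∈ c.edges := by
    cases c with
    | nil => exact absurd hc (by simp [Walk.IsCycle])
    | cons h q => exact ⟨_, by rw [Walk.edges_cons]; exact List.mem_cons_self⟩
  induction e using Sym2.ind with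
  | _ u w =>
    have := (adj_and_reachable_delete_edges_iff_exists_cycle (G := G) (v := u) (w := w)).mpr
      ⟨v, c, hc, he⟩
    exact ⟨u, w, this⟩

lemma card_le_of_connected [Fintype V] {G : SimpleGraph V} (hc : G.Connected) :
    Fintype.card V ≤ G.edgeSet.ncard + 1 := by
  classical
  suffices H : ∀ (N : ℕ) (G : SimpleGraph V), G.edgeSet.ncard ≤ N → G.Connected →
      Fintype.card V ≤ G.edgeSet.ncard + 1 from H _ G le_rfl hc
  intro N
  induction N with
  | zero =>
    intro G hN hcon
    by_cases ha : G.IsAcyclic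
    · exact (tree_card hcon ha).le
    · obtain ⟨u, w, huw, _⟩ := exists_edge_of_not_acyclic ha
      have h1 : (0 : ℕ) < G.edgeSet.ncard := (Set.ncard_pos (Set.toFinite _)).mpr ⟨_, G.mem_edgeSet.mpr huw⟩
      omega
  | succ N ih =>
    intro G hN hcon
    by_cases ha : G.IsAcyclic
    · exact (tree_card hcon ha).le
    · obtain ⟨u, w, huw, hr⟩ := exists_edge_of_not_acyclic ha
      have hc' : (G.deleteEdges {s(u, w)}).Connected := by
        refine connected_deleteEdges hcon ?_
        intro a b hab hm
        simp only [Set.mem_singleton_iff] at hm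
        rw [Sym2.eq_iff] at hm
        rcases hm with ⟨rfl, rfl⟩ | ⟨rfl, rfl⟩
        · exact hr
        · exact hr.symm
      have hE : (G.deleteEdges {s(u, w)}).edgeSet = G.edgeSet \ {s(u, w)} :=
        edgeSet_deleteEdges _
      have hm : s(u, w) ∈ G.edgeSet := G.mem_edgeSet.mpr huw
      have hcard : (G.deleteEdges {s(u, w)}).edgeSet.ncard = G.edgeSet.ncard - 1 := by
        rw [hE, Set.ncard_diff_singleton_of_mem hm]
      have h1 : (0 : ℕ) < G.edgeSet.ncard := (Set.ncard_pos (Set.toFinite _)).mpr ⟨_, hm⟩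
      have := ih (G.deleteEdges {s(u, w)}) (by omega) hc'
      omega

lemma acyclic_of_card [Fintype V] {G : SimpleGraph V} (hc : G.Connected)
    (h : G.edgeSet.ncard + 1 ≤ Fintype.card V) : G.IsAcyclic := by
  by_contra ha
  obtain ⟨u, w, huw, hr⟩ := exists_edge_of_not_acyclic ha
  have hc' : (G.deleteEdges {s(u, w)}).Connected := by
    refine connected_deleteEdges hc ?_
    intro a b hab hm
    simp only [Set.mem_singleton_iff] at hm
    rw [Sym2.eq_iff] at hm
    rcases hm with ⟨rfl, rfl⟩ | ⟨rfl, rfl⟩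
    · exact hr
    · exact hr.symm
  have hE : (G.deleteEdges {s(u, w)}).edgeSet = G.edgeSet \ {s(u, w)} :=
    edgeSet_deleteEdges _
  have hm : s(u, w) ∈ G.edgeSet := G.mem_edgeSet.mpr huw
  have hcard : (G.deleteEdges {s(u, w)}).edgeSet.ncard = G.edgeSet.ncard - 1 := by
    rw [hE, Set.ncard_diff_singleton_of_mem hm]
  have h1 : (0 : ℕ) < G.edgeSet.ncard := (Set.ncard_pos (Set.toFinite _)).mpr ⟨_, hm⟩
  have := card_le_of_connected hc'
  omega

end TreeExtendAux

open SimpleGraph Set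

namespace TreeExtendAux2

variable {V : Type*}

lemma subgraph_edge_ncard [Fintype V] {G : SimpleGraph V} (H : G.Subgraph) :
    H.coe.edgeSet.ncard = H.edgeSet.ncard := by
  rw [← Subgraph.image_coe_edgeSet_coe]
  exact (Set.ncard_image_of_injective _ (Sym2.map.injective Subtype.val_injective)).symm

lemma subgraph_tree_card [Fintype V] {G : SimpleGraph V} {H : G.Subgraph}
    (hc : H.Connected) (ha : H.coe.IsAcyclic) : H.verts.ncard = H.edgeSet.ncard + 1 := by
  haveI : Fintype H.verts := Fintype.ofFinite _
  have h2 := TreeExtendAux.tree_card hc.coe ha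
  rw [subgraph_edge_ncard] at h2
  rw [← h2, Set.ncard_eq_toFinset_card', Set.toFinset_card]

lemma subgraph_acyclic_of_card [Fintype V] {G : SimpleGraph V} {H : G.Subgraph}
    (hc : H.Connected) (h : H.edgeSet.ncard + 1 = H.verts.ncard) : H.coe.IsAcyclic := by
  haveI : Fintype H.verts := Fintype.ofFinite _
  apply TreeExtendAux.acyclic_of_card hc.coe
  rw [subgraph_edge_ncard, h, Set.ncard_eq_toFinset_card', Set.toFinset_card]

lemma subgraph_edgeSet_deleteEdges {G : SimpleGraph V} (H : G.Subgraph) (s : Set (Sym2 V)) :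
    (H.deleteEdges s).edgeSet = H.edgeSet \ s := by
  ext e
  induction e using Sym2.ind with
  | _ a b =>
    simp [Subgraph.mem_edgeSet, Subgraph.deleteEdges_adj, Set.mem_diff]

lemma subgraph_connected_deleteEdge {G : SimpleGraph V} {H : G.Subgraph} (hc : H.Connected)
    {u w : V} (hu : u ∈ H.verts) (hw : w ∈ H.verts)
    (hr : ((H.deleteEdges {s(u, w)}).coe).Reachable ⟨u, hu⟩ ⟨w, hw⟩) :
    (H.deleteEdges {s(u, w)}).Connected := by
  constructor
  rw [Subgraph.coe_deleteEdges_eq] at hr ⊢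
  apply TreeExtendAux.connected_deleteEdges hc.coe
  intro a b hab hm
  simp only [Set.mem_preimage, Sym2.map_pair_eq, Set.mem_singleton_iff, Sym2.eq_iff] at hm
  rcases hm with ⟨h1, h2⟩ | ⟨h1, h2⟩
  · have ha : a = ⟨u, hu⟩ := Subtype.ext h1
    have hb : b = ⟨w, hw⟩ := Subtype.ext h2
    rw [ha, hb]; exact hr
  · have ha : a = ⟨w, hw⟩ := Subtype.ext h1
    have hb : b = ⟨u, hu⟩ := Subtype.ext h2
    rw [ha, hb]; exact hr.symm

variable {α β : Type*}

def Proper (χ : Sym2 α → β) (A : Set (Sym2 α)) : Prop :=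
  ∀ e ∈ A, ∀ f ∈ A, e ≠ f → (∃ v : α, v ∈ e ∧ v ∈ f) → χ e ≠ χ f

lemma Proper.mono {χ : Sym2 α → β} {A B : Set (Sym2 α)} (h : Proper χ A) (hBA : B ⊆ A) :
    Proper χ B := fun e he f hf => h e (hBA he) f (hBA hf)

lemma Proper.insert' {χ : Sym2 α → β} {A : Set (Sym2 α)} {e0 : Sym2 α} (hA : Proper χ A)
    (h : ∀ f ∈ A, (∃ v : α, v ∈ e0 ∧ v ∈ f) → χ e0 ≠ χ f) :
    Proper χ (insert e0 A) := by
  intro e he f hf hef hshare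
  rcases he with rfl | he <;> rcases hf with rfl | hf
  · exact absurd rfl hef
  · exact h f hf hshare
  · exact fun hch => (h e he (let ⟨v, h1, h2⟩ := hshare; ⟨v, h2, h1⟩)) hch.symm
  · exact hA e he f hf hef hshare

lemma exists_nbr {G : SimpleGraph V} (T : G.Subgraph) {e : Sym2 V} {v : V}
    (he : e ∈ T.edgeSet) (hv : v ∈ e) : ∃ w, T.Adj v w ∧ e = s(v, w) := by
  induction e using Sym2.ind with
  | _ a b =>
    rw [Subgraph.mem_edgeSet] at he
    rcases Sym2.mem_iff.mp hv with rfl | rfl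
    · exact ⟨b, he, rfl⟩
    · exact ⟨a, he.symm, Sym2.eq_swap⟩

end TreeExtendAux2

open SimpleGraph Set

namespace TreeExtendAux4

def Goal (t n m : ℕ) (χ : Sym2 (Fin n) → Fin t) (T : (⊤ : SimpleGraph (Fin n)).Subgraph)
    (x y : Fin n) : Prop :=
  ∃ T' : (⊤ : SimpleGraph (Fin n)).Subgraph,
    T'.Connected ∧ T'.coe.IsAcyclic ∧
    T'.verts ⊆ T.verts ∪ {x, y} ∧
    (T'.edgeSet.ncard = m + 1 ∨ T'.edgeSet.ncard = m + 2) ∧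
    (∀ e ∈ T.edgeSet, ∃ f ∈ T'.edgeSet, χ f = χ e) ∧
    (∃ f ∈ T'.edgeSet, χ f = χ s(x, y)) ∧
    (∀ e ∈ T'.edgeSet, ∀ f ∈ T'.edgeSet, e ≠ f →
      (∃ v : Fin n, v ∈ e ∧ v ∈ f) → χ e ≠ χ f)

lemma Goal.swap {t n m : ℕ} {χ : Sym2 (Fin n) → Fin t} {T : (⊤ : SimpleGraph (Fin n)).Subgraph}
    {x y : Fin n} (h : Goal t n m χ T y x) : Goal t n m χ T x y := by
  obtain ⟨T', h1, h2, h3, h4, h5, h6, h7⟩ := h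
  refine ⟨T', h1, h2, ?_, h4, h5, ?_, h7⟩
  · rwa [Set.pair_comm y x] at h3
  · rwa [show s(y, x) = s(x, y) from Sym2.eq_swap] at h6

variable {t n m : ℕ} {χ : Sym2 (Fin n) → Fin t} {T : (⊤ : SimpleGraph (Fin n)).Subgraph}

lemma caseA (hconn : T.Connected) (hacyclic : T.coe.IsAcyclic) (hTm : T.edgeSet.ncard = m)
    (hproper : TreeExtendAux2.Proper χ T.edgeSet)
    (x y : Fin n) (hx : x ∉ T.verts)
    (hcol : ∀ e ∈ T.edgeSet, χ e ≠ χ s(x, y))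
    (v : Fin n) (hv : v ∈ T.verts) (hvx : χ s(v, x) = χ s(x, y)) :
    Goal t n m χ T x y := by
  have hvne : v ≠ x := fun h => hx (h ▸ hv)
  have hadj : (⊤ : SimpleGraph (Fin n)).Adj v x := by simpa using hvne
  set T' := T ⊔ (⊤ : SimpleGraph (Fin n)).subgraphOfAdj hadj with hT'
  have hverts : T'.verts = insert x T.verts := by
    rw [hT', Subgraph.verts_sup, subgraphOfAdj_verts]
    ext a
    simp only [Set.mem_union, Set.mem_insert_iff, Set.mem_singleton_iff]
    constructor
    · rintro (h | rfl | rfl)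
      · exact Or.inr h
      · exact Or.inr hv
      · exact Or.inl rfl
    · rintro (rfl | h)
      · exact Or.inr (Or.inr rfl)
      · exact Or.inl h
  have hnotmem : s(v, x) ∉ T.edgeSet := fun h =>
    hx (Subgraph.mem_verts_of_mem_edge h (by simp))
  have hedges : T'.edgeSet = insert s(v, x) T.edgeSet := by
    rw [hT', Subgraph.edgeSet_sup, SimpleGraph.edgeSet_subgraphOfAdj, Set.union_singleton]
  have hconn' : T'.Connected :=
    Subgraph.connected_sup hconn.preconnected (Subgraph.subgraphOfAdj_connected hadj).preconnected
      ⟨v, by rw [Subgraph.verts_inf]; exact ⟨hv, by simp⟩⟩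
  have hecard : T'.edgeSet.ncard = m + 1 := by
    rw [hedges, Set.ncard_insert_of_notMem hnotmem (Set.toFinite _), hTm]
  have hvcard : T'.verts.ncard = m + 2 := by
    rw [hverts, Set.ncard_insert_of_notMem hx (Set.toFinite _),
      TreeExtendAux2.subgraph_tree_card hconn hacyclic, hTm]
  refine ⟨T', hconn', TreeExtendAux2.subgraph_acyclic_of_card hconn' (by omega), ?_,
    Or.inl hecard, ?_, ?_, ?_⟩
  · rw [hverts]
    intro a ha
    simp only [Set.mem_insert_iff] at ha
    rcases ha with rfl | ha
    · exact Or.inr (Or.inl rfl)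
    · exact Or.inl ha
  · exact fun e he => ⟨e, by rw [hedges]; exact Set.mem_insert_of_mem _ he, rfl⟩
  · exact ⟨s(v, x), by rw [hedges]; exact Set.mem_insert _ _, hvx⟩
  · rw [hedges]
    refine TreeExtendAux2.Proper.insert' hproper ?_
    intro f hf _
    rw [hvx]
    exact (hcol f hf).symm

lemma caseB (hconn : T.Connected) (hacyclic : T.coe.IsAcyclic) (hTm : T.edgeSet.ncard = m)
    (hproper : TreeExtendAux2.Proper χ T.edgeSet)
    (x y : Fin n) (hxy : x ≠ y) (hx : x ∉ T.verts) (hy : y ∉ T.verts)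
    (hcol : ∀ e ∈ T.edgeSet, χ e ≠ χ s(x, y))
    (v : Fin n) (hv : v ∈ T.verts) (hvx_ne : χ s(v, x) ≠ χ s(x, y))
    (hvS : ∀ e ∈ T.edgeSet, v ∈ e → χ e ≠ χ s(v, x)) :
    Goal t n m χ T x y := by
  have hvnx : v ≠ x := fun h => hx (h ▸ hv)
  have hvny : v ≠ y := fun h => hy (h ▸ hv)
  have hadj1 : (⊤ : SimpleGraph (Fin n)).Adj v x := by simpa using hvnx
  have hadj2 : (⊤ : SimpleGraph (Fin n)).Adj x y := by simpa using hxy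
  set T' := T ⊔ (⊤ : SimpleGraph (Fin n)).subgraphOfAdj hadj1
    ⊔ (⊤ : SimpleGraph (Fin n)).subgraphOfAdj hadj2 with hT'
  have hverts : T'.verts = insert y (insert x T.verts) := by
    rw [hT']
    simp only [Subgraph.verts_sup, subgraphOfAdj_verts]
    ext a
    simp only [Set.mem_union, Set.mem_insert_iff, Set.mem_singleton_iff]
    constructor
    · rintro ((h | rfl | rfl) | rfl | rfl) <;> tauto
    · rintro (rfl | rfl | h) <;> tauto
  have hn1 : s(v, x) ∉ T.edgeSet := fun h =>
    hx (Subgraph.mem_verts_of_mem_edge h (by simp))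
  have hd1 : s(x, y) ≠ s(v, x) := by simp [Sym2.eq_iff, hvnx.symm, hvny.symm, hxy]
  have hn2 : s(x, y) ∉ insert s(v, x) T.edgeSet := by
    simp only [Set.mem_insert_iff, hd1, false_or]
    exact fun h => hx (Subgraph.mem_verts_of_mem_edge h (by simp))
  have hedges : T'.edgeSet = insert s(x, y) (insert s(v, x) T.edgeSet) := by
    rw [hT', Subgraph.edgeSet_sup, Subgraph.edgeSet_sup, SimpleGraph.edgeSet_subgraphOfAdj,
      SimpleGraph.edgeSet_subgraphOfAdj, Set.union_singleton, Set.union_singleton]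
  have hconn' : T'.Connected := by
    refine Subgraph.connected_sup ?_ (Subgraph.subgraphOfAdj_connected hadj2).preconnected ?_
    · exact (Subgraph.connected_sup hconn.preconnected (Subgraph.subgraphOfAdj_connected hadj1).preconnected
        ⟨v, by rw [Subgraph.verts_inf]; exact ⟨hv, by simp⟩⟩).preconnected
    · exact ⟨x, by rw [Subgraph.verts_inf]; exact ⟨by simp [Subgraph.verts_sup], by simp⟩⟩
  have hecard : T'.edgeSet.ncard = m + 2 := by
    rw [hedges, Set.ncard_insert_of_notMem hn2 (Set.toFinite _),
      Set.ncard_insert_of_notMem hn1 (Set.toFinite _), hTm]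
  have hyx : y ∉ insert x T.verts := by
    simp only [Set.mem_insert_iff, hy, or_false]
    exact hxy.symm
  have hvcard : T'.verts.ncard = m + 3 := by
    rw [hverts, Set.ncard_insert_of_notMem hyx (Set.toFinite _),
      Set.ncard_insert_of_notMem hx (Set.toFinite _),
      TreeExtendAux2.subgraph_tree_card hconn hacyclic, hTm]
  refine ⟨T', hconn', TreeExtendAux2.subgraph_acyclic_of_card hconn' (by omega), ?_,
    Or.inr hecard, ?_, ?_, ?_⟩
  · rw [hverts]
    intro a ha
    simp only [Set.mem_insert_iff] at ha
    simp only [Set.mem_union, Set.mem_insert_iff, Set.mem_singleton_iff]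
    tauto
  · exact fun e he => ⟨e, by rw [hedges]; exact Set.mem_insert_of_mem _ (Set.mem_insert_of_mem _ he), rfl⟩
  · exact ⟨s(x, y), by rw [hedges]; exact Set.mem_insert _ _, rfl⟩
  · rw [hedges]
    refine TreeExtendAux2.Proper.insert' (TreeExtendAux2.Proper.insert' hproper ?_) ?_
    · intro f hf hshare
      obtain ⟨z, hz1, hz2⟩ := hshare
      have hzv : z = v := by
        rcases Sym2.mem_iff.mp hz1 with rfl | rfl
        · rfl
        · exact absurd (Subgraph.mem_verts_of_mem_edge hf hz2) hx
      subst hzv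
      exact (hvS f hf hz2).symm
    · intro f hf _
      simp only [Set.mem_insert_iff] at hf
      rcases hf with rfl | hf
      · exact hvx_ne.symm
      · exact (hcol f hf).symm


open SimpleGraph Set


variable {t n m : ℕ} {χ : Sym2 (Fin n) → Fin t} {T : (⊤ : SimpleGraph (Fin n)).Subgraph}

set_option maxHeartbeats 1000000 in
lemma caseC (hm : 1 ≤ m) (hconn : T.Connected) (hacyclic : T.coe.IsAcyclic)
    (hTm : T.edgeSet.ncard = m)
    (hproper : TreeExtendAux2.Proper χ T.edgeSet)
    (x y : Fin n) (hxy : x ≠ y) (hx : x ∉ T.verts) (hy : y ∉ T.verts)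
    (hcol : ∀ e ∈ T.edgeSet, χ e ≠ χ s(x, y))
    (u w : Fin n) (hadjT : T.Adj u w)
    (h1 : χ s(u, y) = χ s(u, w)) (h2 : χ s(w, x) = χ s(u, w)) :
    Goal t n m χ T x y := by
  have hu : u ∈ T.verts := T.edge_vert hadjT
  have hw : w ∈ T.verts := T.edge_vert hadjT.symm
  have huw : u ≠ w := (T.adj_sub hadjT).ne
  have hwu : w ≠ u := huw.symm
  have hux : u ≠ x := fun h => hx (h ▸ hu)
  have hxu : x ≠ u := hux.symm
  have huy : u ≠ y := fun h => hy (h ▸ hu)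
  have hyu : y ≠ u := huy.symm
  have hwx : w ≠ x := fun h => hx (h ▸ hw)
  have hxw : x ≠ w := hwx.symm
  have hwy : w ≠ y := fun h => hy (h ▸ hw)
  have hyw : y ≠ w := hwy.symm
  have hyx : y ≠ x := hxy.symm
  have he0 : s(u, w) ∈ T.edgeSet := Subgraph.mem_edgeSet.mpr hadjT
  have hc0 : χ s(u, w) ≠ χ s(x, y) := hcol _ he0
  have hadj1 : (⊤ : SimpleGraph (Fin n)).Adj u y := by simpa using huy
  have hadj2 : (⊤ : SimpleGraph (Fin n)).Adj y x := by simpa using hyx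
  have hadj3 : (⊤ : SimpleGraph (Fin n)).Adj x w := by simpa using hxw
  set U := T ⊔ (⊤ : SimpleGraph (Fin n)).subgraphOfAdj hadj1
    ⊔ (⊤ : SimpleGraph (Fin n)).subgraphOfAdj hadj2
    ⊔ (⊤ : SimpleGraph (Fin n)).subgraphOfAdj hadj3 with hU
  set T' := U.deleteEdges {s(u, w)} with hT'
  have hUverts : U.verts = insert y (insert x T.verts) := by
    rw [hU]
    simp only [Subgraph.verts_sup, subgraphOfAdj_verts]
    ext a
    simp only [Set.mem_union, Set.mem_insert_iff, Set.mem_singleton_iff]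
    constructor
    · rintro (((h | rfl | rfl) | rfl | rfl) | rfl | rfl) <;> tauto
    · rintro (rfl | rfl | h) <;> tauto
  have hT'verts : T'.verts = insert y (insert x T.verts) := by
    rw [hT', Subgraph.deleteEdges_verts, hUverts]
  have d1 : s(u, y) ≠ s(u, w) := by simp [Sym2.eq_iff, hyw, huw]
  have d2 : s(y, x) ≠ s(u, w) := by simp [Sym2.eq_iff, hyu, hyw, hxw, hxu]
  have d3 : s(x, w) ≠ s(u, w) := by simp [Sym2.eq_iff, hxu, hxw, hwu]
  have hUedges : U.edgeSet =
      insert s(x, w) (insert s(y, x) (insert s(u, y) T.edgeSet)) := by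
    rw [hU, Subgraph.edgeSet_sup, Subgraph.edgeSet_sup, Subgraph.edgeSet_sup,
      SimpleGraph.edgeSet_subgraphOfAdj, SimpleGraph.edgeSet_subgraphOfAdj,
      SimpleGraph.edgeSet_subgraphOfAdj, Set.union_singleton, Set.union_singleton,
      Set.union_singleton]
  have hT'edges : T'.edgeSet =
      insert s(x, w) (insert s(y, x) (insert s(u, y) (T.edgeSet \ {s(u, w)}))) := by
    rw [hT', TreeExtendAux2.subgraph_edgeSet_deleteEdges, hUedges]
    ext e
    simp only [Set.mem_insert_iff, Set.mem_diff, Set.mem_singleton_iff]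
    constructor
    · rintro ⟨(rfl | rfl | rfl | he), hne⟩ <;> tauto
    · rintro (rfl | rfl | rfl | ⟨he, hne⟩) <;> exact ⟨by tauto, by tauto⟩
  -- edge counts
  have hA0 : (T.edgeSet \ {s(u, w)}).ncard = m - 1 := by
    rw [Set.ncard_diff_singleton_of_mem he0, hTm]
  have n3 : s(u, y) ∉ T.edgeSet \ {s(u, w)} := fun h =>
    hy (Subgraph.mem_verts_of_mem_edge h.1 (by simp))
  have n2 : s(y, x) ∉ insert s(u, y) (T.edgeSet \ {s(u, w)}) := by
    simp only [Set.mem_insert_iff]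
    rintro (h | h)
    · exact absurd h (by simp [Sym2.eq_iff, hyu, hxu])
    · exact hy (Subgraph.mem_verts_of_mem_edge h.1 (by simp))
  have n1 : s(x, w) ∉ insert s(y, x) (insert s(u, y) (T.edgeSet \ {s(u, w)})) := by
    simp only [Set.mem_insert_iff]
    rintro (h | h | h)
    · exact absurd h (by simp [Sym2.eq_iff, hxy, hwy])
    · exact absurd h (by simp [Sym2.eq_iff, hxu, hxy])
    · exact hx (Subgraph.mem_verts_of_mem_edge h.1 (by simp))
  have hecard : T'.edgeSet.ncard = m + 2 := by
    rw [hT'edges, Set.ncard_insert_of_notMem n1 (Set.toFinite _),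
      Set.ncard_insert_of_notMem n2 (Set.toFinite _),
      Set.ncard_insert_of_notMem n3 (Set.toFinite _), hA0]
    omega
  have hyix : y ∉ insert x T.verts := by
    simp only [Set.mem_insert_iff, hy, or_false]
    exact hyx
  have hvcard : T'.verts.ncard = m + 3 := by
    rw [hT'verts, Set.ncard_insert_of_notMem hyix (Set.toFinite _),
      Set.ncard_insert_of_notMem hx (Set.toFinite _),
      TreeExtendAux2.subgraph_tree_card hconn hacyclic, hTm]
  -- connectivity
  have hUconn : U.Connected := by
    refine Subgraph.connected_sup ?_ (Subgraph.subgraphOfAdj_connected hadj3).preconnected ?_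
    · refine (Subgraph.connected_sup ?_ (Subgraph.subgraphOfAdj_connected hadj2).preconnected ?_).preconnected
      · exact (Subgraph.connected_sup hconn.preconnected (Subgraph.subgraphOfAdj_connected hadj1).preconnected
          ⟨u, by rw [Subgraph.verts_inf]; exact ⟨hu, by simp⟩⟩).preconnected
      · exact ⟨y, by rw [Subgraph.verts_inf]; exact ⟨by simp [Subgraph.verts_sup], by simp⟩⟩
    · exact ⟨x, by rw [Subgraph.verts_inf]; exact ⟨by simp [Subgraph.verts_sup], by simp⟩⟩
  have hu' : u ∈ U.verts := by rw [hUverts]; simp [hu]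
  have hw' : w ∈ U.verts := by rw [hUverts]; simp [hw]
  have hy' : y ∈ U.verts := by rw [hUverts]; simp
  have hx' : x ∈ U.verts := by rw [hUverts]; simp
  have hD1 : T'.Adj u y := by
    rw [hT', Subgraph.deleteEdges_adj]
    exact ⟨by simp [hU, Subgraph.sup_adj], by simpa using d1⟩
  have hD2 : T'.Adj y x := by
    rw [hT', Subgraph.deleteEdges_adj]
    exact ⟨by simp [hU, Subgraph.sup_adj], by simpa using d2⟩
  have hD3 : T'.Adj x w := by
    rw [hT', Subgraph.deleteEdges_adj]
    exact ⟨by simp [hU, Subgraph.sup_adj], by simpa using d3⟩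
  have hT'conn : T'.Connected := by
    rw [hT']
    refine TreeExtendAux2.subgraph_connected_deleteEdge hUconn hu' hw' ?_
    have hc1 : (U.deleteEdges {s(u, w)}).coe.Adj ⟨u, hu'⟩ ⟨y, hy'⟩ := by
      rw [Subgraph.coe_adj]; exact hD1
    have hc2 : (U.deleteEdges {s(u, w)}).coe.Adj ⟨y, hy'⟩ ⟨x, hx'⟩ := by
      rw [Subgraph.coe_adj]; exact hD2
    have hc3 : (U.deleteEdges {s(u, w)}).coe.Adj ⟨x, hx'⟩ ⟨w, hw'⟩ := by
      rw [Subgraph.coe_adj]; exact hD3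
    exact hc1.reachable.trans (hc2.reachable.trans hc3.reachable)
  refine ⟨T', hT'conn, TreeExtendAux2.subgraph_acyclic_of_card hT'conn (by omega), ?_,
    Or.inr hecard, ?_, ?_, ?_⟩
  · rw [hT'verts]
    intro a ha
    simp only [Set.mem_insert_iff] at ha
    simp only [Set.mem_union, Set.mem_insert_iff, Set.mem_singleton_iff]
    tauto
  · intro e he
    by_cases hc : e = s(u, w)
    · refine ⟨s(u, y), by
        rw [hT'edges]
        exact Set.mem_insert_of_mem _ (Set.mem_insert_of_mem _ (Set.mem_insert _ _)), ?_⟩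
      rw [h1, hc]
    · exact ⟨e, by
        rw [hT'edges]
        exact Set.mem_insert_of_mem _ (Set.mem_insert_of_mem _
          (Set.mem_insert_of_mem _ ⟨he, hc⟩)), rfl⟩
  · refine ⟨s(y, x), by
      rw [hT'edges]
      exact Set.mem_insert_of_mem _ (Set.mem_insert _ _), ?_⟩
    rw [show s(y, x) = s(x, y) from Sym2.eq_swap]
  · rw [hT'edges]
    have hbase : TreeExtendAux2.Proper χ (T.edgeSet \ {s(u, w)}) :=
      hproper.mono Set.diff_subset
    refine TreeExtendAux2.Proper.insert'
      (TreeExtendAux2.Proper.insert' (TreeExtendAux2.Proper.insert' hbase ?_) ?_) ?_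
    · -- s(u,y) vs A0
      intro f hf hshare
      obtain ⟨z, hz1, hz2⟩ := hshare
      rcases Sym2.mem_iff.mp hz1 with h | h
      · rw [h1]
        exact (hproper f hf.1 s(u, w) he0 hf.2 ⟨u, h ▸ hz2, by simp⟩).symm
      · exact absurd (Subgraph.mem_verts_of_mem_edge hf.1 (h ▸ hz2)) hy
    · -- s(y,x) vs insert s(u,y) A0
      intro f hf _
      rw [show s(y, x) = s(x, y) from Sym2.eq_swap]
      simp only [Set.mem_insert_iff] at hf
      rcases hf with rfl | hf
      · rw [h1]
        exact hc0.symm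
      · exact (hcol f hf.1).symm
    · -- s(x,w) vs insert s(y,x) (insert s(u,y) A0)
      intro f hf hshare
      simp only [Set.mem_insert_iff] at hf
      rcases hf with rfl | rfl | hf
      · rw [show s(x, w) = s(w, x) from Sym2.eq_swap, h2,
          show s(y, x) = s(x, y) from Sym2.eq_swap]
        exact hc0
      · obtain ⟨z, hz1, hz2⟩ := hshare
        rcases Sym2.mem_iff.mp hz1 with rfl | rfl <;>
          rcases Sym2.mem_iff.mp hz2 with h | h
        · exact absurd h hxu
        · exact absurd h hxy
        · exact absurd h hwu
        · exact absurd h hwy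
      · obtain ⟨z, hz1, hz2⟩ := hshare
        rcases Sym2.mem_iff.mp hz1 with h | h
        · exact absurd (Subgraph.mem_verts_of_mem_edge hf.1 (h ▸ hz2)) hx
        · rw [show s(x, w) = s(w, x) from Sym2.eq_swap, h2]
          exact (hproper f hf.1 s(u, w) he0 hf.2 ⟨w, h ▸ hz2, by simp⟩).symm


end TreeExtendAux4

open SimpleGraph Set

namespace TreeExtendAux3

lemma mixed_cycle {W : Type*} [Fintype W] [Nonempty W] {G : SimpleGraph W}
    (hG : G.IsAcyclic) (f g : W → W)
    (hf : ∀ v, G.Adj v (f v)) (hg : ∀ v, G.Adj v (g v)) :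
    ∃ u, f (g u) = u ∨ g (f u) = u := by
  by_contra hcon
  push_neg at hcon
  obtain ⟨v0⟩ := ‹Nonempty W›
  let a : ℕ → W := fun k => Nat.rec v0 (fun k ak => if Even k then g ak else f ak) k
  have ha_succ : ∀ k, a (k + 1) = if Even k then g (a k) else f (a k) := fun k => rfl
  have hadj : ∀ k, G.Adj (a k) (a (k + 1)) := by
    intro k
    rw [ha_succ]
    split
    · exact hg _
    · exact hf _
  have hback : ∀ i, a (i + 2) ≠ a i := by
    intro i h
    have h1 := ha_succ i
    have h2 := ha_succ (i + 1)
    rcases Nat.even_or_odd i with he | ho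
    · rw [if_pos he] at h1
      rw [if_neg (by simp [Nat.even_add_one, he]), h1] at h2
      exact (hcon (a i)).1 (h2 ▸ h)
    · rw [if_neg (Nat.not_even_iff_odd.mpr ho)] at h1
      rw [if_pos (Odd.add_one ho), h1] at h2
      exact (hcon (a i)).2 (h2 ▸ h)
  let Wk : (j k : ℕ) → G.Walk (a (j + k)) (a j) := fun j k =>
    Nat.rec (motive := fun k => G.Walk (a (j + k)) (a j)) Walk.nil
      (fun k wk => Walk.cons ((hadj (j + k)).symm) wk) k
  have hWsup : ∀ j k, ∀ z ∈ (Wk j k).support, ∃ i, j ≤ i ∧ i ≤ j + k ∧ z = a i := by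
    intro j k
    induction k with
    | zero =>
      intro z hz
      rw [show Wk j 0 = Walk.nil from rfl, Walk.support_nil] at hz
      exact ⟨j, le_rfl, by omega, List.mem_singleton.mp hz⟩
    | succ k ih =>
      intro z hz
      rw [show Wk j (k + 1) = Walk.cons ((hadj (j + k)).symm) (Wk j k) from rfl,
        Walk.support_cons] at hz
      rcases List.mem_cons.mp hz with rfl | hz'
      · exact ⟨j + k + 1, by omega, by omega, rfl⟩
      · obtain ⟨i, h1, h2, h3⟩ := ih z hz'
        exact ⟨i, h1, by omega, h3⟩
  have hWlen : ∀ j k, (Wk j k).length = k := by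
    intro j k
    induction k with
    | zero => rfl
    | succ k ih =>
      rw [show Wk j (k + 1) = Walk.cons ((hadj (j + k)).symm) (Wk j k) from rfl,
        Walk.length_cons, ih]
  have hWpath : ∀ k j, (Wk j k).IsPath := by
    intro k
    induction k using Nat.strong_induction_on with
    | _ k ih =>
      intro j
      match k with
      | 0 => exact Walk.IsPath.nil
      | (k' + 1) =>
        rw [show Wk j (k' + 1) = Walk.cons ((hadj (j + k')).symm) (Wk j k') from rfl,
          Walk.cons_isPath_iff]
        refine ⟨ih k' (Nat.lt_succ_self _) j, ?_⟩
        intro hmem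
        obtain ⟨i, hij, hik, hz⟩ := hWsup j k' _ hmem
        rcases eq_or_lt_of_le hik with hik' | hik'
        · exact (hadj (j + k')).ne (hz.trans (by rw [← hik'])).symm
        · rcases eq_or_lt_of_le (Nat.succ_le_of_lt hik') with hik2 | hik2
          · exact hback i (by rw [show i + 2 = j + k' + 1 by omega]; exact hz)
          · have hd : i + (j + k' - i) = j + k' := by omega
            have hd2 : 2 ≤ j + k' - i := by omega
            have hz' : a (j + k' + 1) = a i := hz
            have hA : G.Adj (a (j + k')) (a i) := by
              have := hadj (j + k')
              rwa [hz'] at this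
            have hP1 : ((Wk i (j + k' - i)).copy (congrArg a hd) rfl).IsPath := by
              rw [Walk.isPath_copy]
              exact ih _ (by omega) i
            have := hG.path_unique ⟨_, hP1⟩ (Path.singleton hA)
            have hlen := congrArg (fun p : G.Path (a (j + k')) (a i) => p.1.length) this
            simp only [Path.singleton, Walk.length_copy, Walk.length_cons,
              Walk.length_nil, hWlen] at hlen
            omega
  have hfin := (hWpath (Fintype.card W) 0).length_lt
  have := hWlen 0 (Fintype.card W)
  omega

end TreeExtendAux3
set_option maxHeartbeats 1000000 in
/-- TreeExtend (existence content): given a properly edge-colored subtree `T` of `K_n`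
with `m ≥ 1` edges and an edge `xy` disjoint from `T` whose color does not appear on
`T`, there is a properly edge-colored subtree `T*` with `V(T*) ⊆ V(T) ∪ {x, y}`,
having `m+1` or `m+2` edges, on which all colors of `T` together with `χ(xy)` appear. -/
theorem treeExtend (t n m : ℕ) (ht : 1 ≤ t) (hm : 1 ≤ m)
    (χ : Sym2 (Fin n) → Fin t)
    (T : (⊤ : SimpleGraph (Fin n)).Subgraph)
    (hconn : T.Connected) (hacyclic : T.coe.IsAcyclic)
    (hTm : T.edgeSet.ncard = m)
    (hproper : ∀ e ∈ T.edgeSet, ∀ f ∈ T.edgeSet, e ≠ f →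
      (∃ v : Fin n, v ∈ e ∧ v ∈ f) → χ e ≠ χ f)
    (x y : Fin n) (hxy : x ≠ y) (hx : x ∉ T.verts) (hy : y ∉ T.verts)
    (hcol : ∀ e ∈ T.edgeSet, χ e ≠ χ s(x, y)) :
    ∃ T' : (⊤ : SimpleGraph (Fin n)).Subgraph,
      T'.Connected ∧ T'.coe.IsAcyclic ∧
      T'.verts ⊆ T.verts ∪ {x, y} ∧
      (T'.edgeSet.ncard = m + 1 ∨ T'.edgeSet.ncard = m + 2) ∧
      (∀ e ∈ T.edgeSet, ∃ f ∈ T'.edgeSet, χ f = χ e) ∧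
      (∃ f ∈ T'.edgeSet, χ f = χ s(x, y)) ∧
      (∀ e ∈ T'.edgeSet, ∀ f ∈ T'.edgeSet, e ≠ f →
        (∃ v : Fin n, v ∈ e ∧ v ∈ f) → χ e ≠ χ f) := by
  classical
  show TreeExtendAux4.Goal t n m χ T x y
  have hproper' : TreeExtendAux2.Proper χ T.edgeSet := hproper
  have hswap : s(y, x) = s(x, y) := Sym2.eq_swap
  by_cases hA : ∃ v ∈ T.verts, χ s(v, x) = χ s(x, y)
  · obtain ⟨v, hv, hvx⟩ := hA
    exact TreeExtendAux4.caseA hconn hacyclic hTm hproper' x y hx hcol v hv hvx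
  by_cases hA' : ∃ v ∈ T.verts, χ s(v, y) = χ s(x, y)
  · obtain ⟨v, hv, hvy⟩ := hA'
    refine TreeExtendAux4.Goal.swap
      (TreeExtendAux4.caseA hconn hacyclic hTm hproper' y x hy ?_ v hv ?_)
    · intro e he
      rw [hswap]
      exact hcol e he
    · rw [hswap]
      exact hvy
  by_cases hB : ∃ v ∈ T.verts, ∀ e ∈ T.edgeSet, v ∈ e → χ e ≠ χ s(v, x)
  · obtain ⟨v, hv, hvS⟩ := hB
    exact TreeExtendAux4.caseB hconn hacyclic hTm hproper' x y hxy hx hy hcol v hv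
      (fun h => hA ⟨v, hv, h⟩) hvS
  by_cases hB' : ∃ v ∈ T.verts, ∀ e ∈ T.edgeSet, v ∈ e → χ e ≠ χ s(v, y)
  · obtain ⟨v, hv, hvS⟩ := hB'
    refine TreeExtendAux4.Goal.swap
      (TreeExtendAux4.caseB hconn hacyclic hTm hproper' y x hxy.symm hy hx ?_ v hv ?_ hvS)
    · intro e he
      rw [hswap]
      exact hcol e he
    · intro h
      exact hA' ⟨v, hv, by rwa [hswap] at h⟩
  push_neg at hB hB'
  haveI : Nonempty ↥T.verts := hconn.nonempty.to_subtype
  haveI : Fintype ↥T.verts := Fintype.ofFinite _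
  have hfdata : ∀ v : ↥T.verts, ∃ w : ↥T.verts,
      T.coe.Adj v w ∧ χ s((v : Fin n), x) = χ s((v : Fin n), (w : Fin n)) := by
    rintro ⟨v, hv⟩
    obtain ⟨e, he, hve, hχ⟩ := hB v hv
    obtain ⟨w, haw, rfl⟩ := TreeExtendAux2.exists_nbr T he hve
    exact ⟨⟨w, T.edge_vert haw.symm⟩, haw, hχ.symm⟩
  have hgdata : ∀ v : ↥T.verts, ∃ w : ↥T.verts,
      T.coe.Adj v w ∧ χ s((v : Fin n), y) = χ s((v : Fin n), (w : Fin n)) := by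
    rintro ⟨v, hv⟩
    obtain ⟨e, he, hve, hχ⟩ := hB' v hv
    obtain ⟨w, haw, rfl⟩ := TreeExtendAux2.exists_nbr T he hve
    exact ⟨⟨w, T.edge_vert haw.symm⟩, haw, hχ.symm⟩
  choose f hfadj hfχ using hfdata
  choose g hgadj hgχ using hgdata
  obtain ⟨u, hcase | hcase⟩ := TreeExtendAux3.mixed_cycle hacyclic f g hfadj hgadj
  · refine TreeExtendAux4.caseC hm hconn hacyclic hTm hproper' x y hxy hx hy hcol
      (↑u) (↑(g u)) (hgadj u) (hgχ u) ?_
    have h := hfχ (g u)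
    rw [hcase] at h
    exact h.trans (congrArg χ Sym2.eq_swap)
  · refine TreeExtendAux4.Goal.swap
      (TreeExtendAux4.caseC hm hconn hacyclic hTm hproper' y x hxy.symm hy hx ?_
        (↑u) (↑(f u)) (hfadj u) (hfχ u) ?_)
    · intro e he
      rw [hswap]
      exact hcol e he
    · have h := hgχ (f u)
      rw [hcase] at h
      exact h.trans (congrArg χ Sym2.eq_swap)
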